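/- arXiv:2101.04092 — 3 statements merged into one kernel-verified Lean document; each statement's English description precedes it below -/
import Mathlib

section
/- Let ĝ : ℝ → ℂ be a continuous function with |ĝ(t)| ≤ K(1+|t|)^k for all t, and suppose ĝ vanishes on (-a/2, a/2) for some a > 0. Define f(z) = -∫_0^∞ ĝ(t) e^{2πizt} dt for Im z > 0 and f(z) = ∫_{-∞}^0 ĝ(t) e^{2πizt} dt for Im z < 0. Then there is a constant C (depending on K, k, a) such that |f(x+iy)| ≤ C(|y|^{-k-1} + |y|^{-1}) e^{-πa|y|} for all x ∈ ℝ and y ≠ 0. -/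
open MeasureTheory SchwartzMap Complex Filter

noncomputable section

/-- Tempered distributions on ℝ. -/
abbrev TemperedDist := SchwartzMap ℝ ℂ →L[ℂ] ℂ

/-- Fourier transform of a tempered distribution. -/
def fourierTD (α : TemperedDist) : TemperedDist :=
  α.comp (SchwartzMap.fourierTransformCLM ℂ)

/-- Action of the p-th derivative of the Dirac delta at x on a test function. -/
def diracDeriv (p : ℕ) (x : ℝ) (φ : SchwartzMap ℝ ℂ) : ℂ :=
  (-1 : ℂ) ^ p * iteratedDeriv p (⇑φ) x

/-- Support of a tempered distribution. -/
def TDsupport (α : TemperedDist) : Set ℝ :=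
  {x : ℝ | ∀ U : Set ℝ, IsOpen U → x ∈ U →
    ∃ φ : SchwartzMap ℝ ℂ, tsupport ⇑φ ⊆ U ∧ α φ ≠ 0}

/-- Uniformly discrete set. -/
def UniformlyDiscrete (Λ : Set ℝ) : Prop :=
  ∃ δ > (0:ℝ), ∀ x ∈ Λ, ∀ y ∈ Λ, x ≠ y → δ ≤ |x - y|

/-- Counting function. -/
def countFn (Λ : Set ℝ) (r : ℝ) : ℝ := (Λ ∩ Set.Icc (-r) r).ncard

/-- Logarithmic lower density. -/
def DK (Λ : Set ℝ) : ℝ :=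
  liminf (fun R : ℝ => (1 / (2 * R)) * ∫ r in (1:ℝ)..R, countFn Λ r / r) atTop

/-- Locally finite set. -/
def LocallyFinite' (Λ : Set ℝ) : Prop :=
  ∀ K : Set ℝ, IsCompact K → (Λ ∩ K).Finite

lemma aux_pow (k : ℕ) {s : ℝ} (hs : 0 ≤ s) : (1+s)^k ≤ 2^k * (1+s^k) := by
  have h2 : (0:ℝ) ≤ 2^k := by positivity
  have hsk : (0:ℝ) ≤ s^k := pow_nonneg hs k
  rcases le_total s 1 with h|h
  · have h1 : (1+s)^k ≤ 2^k := pow_le_pow_left₀ (by linarith) (by linarith) k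
    nlinarith
  · have h1 : (1+s)^k ≤ (2*s)^k := pow_le_pow_left₀ (by linarith) (by linarith) k
    rw [mul_pow] at h1
    nlinarith

lemma shift_mp (c : ℝ) : MeasurePreserving (fun s : ℝ => s + c)
    (volume.restrict (Set.Ioi (0:ℝ))) (volume.restrict (Set.Ioi c)) := by
  have hmeas : Measurable (fun s : ℝ => s + c) := measurable_add_const c
  refine ⟨hmeas, ?_⟩
  have h1 : (fun s : ℝ => s + c) ⁻¹' (Set.Ioi c) = Set.Ioi 0 := by
    ext s; simp
  rw [← h1, ← Measure.restrict_map hmeas measurableSet_Ioi]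
  congr 1
  exact map_add_right_eq_self volume c

lemma aux_core (g w : ℝ → ℂ) (K a y : ℝ) (k : ℕ) (ha : 0 < a) (hy : 0 < y) (hK : 0 ≤ K)
    (hbound : ∀ t, ‖g t‖ ≤ K * (1+|t|)^k)
    (hv : ∀ t ∈ Set.Ioo (0:ℝ) (a/2), g t = 0)
    (hwn : ∀ t : ℝ, ‖w t‖ = Real.exp (-(2*Real.pi*y*t))) :
    ‖∫ t in Set.Ioi (0:ℝ), g t * w t‖ ≤
      (K * (1+a/2)^k * 2^k * (k.factorial : ℝ)) * (y ^ (-(k:ℝ)-1) + y⁻¹) *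
        Real.exp (-(Real.pi*a*y)) := by
  set c := a/2 with hc
  have hc0 : 0 < c := by positivity
  set b := 2*Real.pi*y with hb
  have hb0 : 0 < b := by positivity
  have hyb : y ≤ b := by rw [hb]; nlinarith [Real.pi_gt_three]
  set F := fun t : ℝ => g t * w t with hF
  set Q := K * (1+c)^k * 2^k * Real.exp (-(b*c)) with hQ
  have hQ0 : 0 ≤ Q := by positivity
  set M := fun t : ℝ => Q * (Real.exp (-(b*(t-c))) + (t-c)^(k:ℝ) * Real.exp (-(b*(t-c)))) with hM
  -- step 1 : restrict to Ioi c
  have e1 : ∫ t in Set.Ioi (0:ℝ), F t = ∫ t in Set.Ioi c, F t := by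
    have hne : ∀ᵐ t : ℝ ∂(volume.restrict (Set.Ioi (0:ℝ))), t ≠ c := by
      refine ae_restrict_of_ae ?_
      rw [ae_iff]
      simp [not_not, Set.setOf_eq_eq_singleton]
    have hae : ∀ᵐ t ∂(volume.restrict (Set.Ioi (0:ℝ))), F t = (Set.Ioi c).indicator F t := by
      filter_upwards [hne, ae_restrict_mem measurableSet_Ioi] with t ht1 ht2
      by_cases h : c < t
      · rw [Set.indicator_of_mem (Set.mem_Ioi.mpr h)]
      · have htc : t < c := lt_of_le_of_ne (not_lt.mp h) ht1
        rw [Set.indicator_of_notMem (by simpa using not_lt.mp h)]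
        show g t * w t = 0
        rw [hv t ⟨ht2, htc⟩, zero_mul]
    calc ∫ t in Set.Ioi (0:ℝ), F t = ∫ t in Set.Ioi (0:ℝ), (Set.Ioi c).indicator F t :=
          integral_congr_ae hae
      _ = ∫ t in Set.Ioi (0:ℝ) ∩ Set.Ioi c, F t := by
          rw [setIntegral_indicator measurableSet_Ioi]
      _ = ∫ t in Set.Ioi c, F t := by
          rw [Set.Ioi_inter_Ioi, max_eq_right hc0.le]
  -- shift machinery
  have emb : MeasurableEmbedding (fun s : ℝ => s + c) :=
    (Homeomorph.addRight c).isClosedEmbedding.measurableEmbedding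
  have mp := shift_mp c
  -- integrand after shift
  have hMshift : (fun s : ℝ => M (s + c)) =
      fun s : ℝ => Q * (Real.exp (-(b*s)) + s^(k:ℝ) * Real.exp (-(b*s))) := by
    funext s; simp [hM, add_sub_cancel_right]
  -- integrability of ψ on Ioi 0
  have i1 : IntegrableOn (fun s : ℝ => Real.exp (-(b*s))) (Set.Ioi (0:ℝ)) := by
    simpa [neg_mul] using exp_neg_integrableOn_Ioi 0 hb0
  have i2 : IntegrableOn (fun s : ℝ => s^(k:ℝ) * Real.exp (-(b*s))) (Set.Ioi (0:ℝ)) := by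
    have h := integrableOn_rpow_mul_exp_neg_mul_rpow (s := (k:ℝ)) (p := 1)
      (lt_of_lt_of_le neg_one_lt_zero (Nat.cast_nonneg k)) one_pos hb0
    simpa [Real.rpow_one, neg_mul] using h
  have iψ : IntegrableOn (fun s : ℝ => Q * (Real.exp (-(b*s)) + s^(k:ℝ) * Real.exp (-(b*s))))
      (Set.Ioi (0:ℝ)) := ((i1.add i2).const_mul Q)
  have iM : IntegrableOn M (Set.Ioi c) := by
    rw [IntegrableOn]
    refine (mp.integrable_comp_emb emb).1 ?_
    have : (M ∘ fun s : ℝ => s + c) = fun s : ℝ =>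
        Q * (Real.exp (-(b*s)) + s^(k:ℝ) * Real.exp (-(b*s))) := by
      funext s; simpa using congrFun hMshift s
    rw [this]; exact iψ
  -- pointwise bound
  have hpt : ∀ᵐ t ∂(volume.restrict (Set.Ioi c)), ‖F t‖ ≤ M t := by
    filter_upwards [ae_restrict_mem measurableSet_Ioi] with t ht
    have hts : 0 ≤ t - c := by simp only [Set.mem_Ioi] at ht; linarith
    have h0t : 0 < t := lt_trans hc0 ht
    have h1 : ‖F t‖ ≤ K * (1+t)^k * Real.exp (-(b*t)) := by
      rw [hF, norm_mul, hwn t]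
      have := hbound t
      rw [abs_of_pos h0t] at this
      exact mul_le_mul_of_nonneg_right this (Real.exp_nonneg _)
    refine h1.trans ?_
    have hexp : Real.exp (-(b*t)) = Real.exp (-(b*(t-c))) * Real.exp (-(b*c)) := by
      rw [← Real.exp_add]; ring_nf
    have hp1 : (1+t)^k ≤ (1+c)^k * (1+(t-c))^k := by
      rw [← mul_pow]
      refine pow_le_pow_left₀ (by linarith) ?_ k
      nlinarith [mul_nonneg hc0.le hts]
    have hp2 : (1+(t-c))^k ≤ 2^k * (1+(t-c)^k) := aux_pow k hts
    have hrw : (t-c)^k = (t-c)^(k:ℝ) := (Real.rpow_natCast _ k).symm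
    calc K * (1+t)^k * Real.exp (-(b*t))
        = K * (1+t)^k * Real.exp (-(b*(t-c))) * Real.exp (-(b*c)) := by
          rw [hexp]; ring
      _ ≤ K * ((1+c)^k * (2^k * (1+(t-c)^k))) * Real.exp (-(b*(t-c))) * Real.exp (-(b*c)) := by
          have : (1+t)^k ≤ (1+c)^k * (2^k * (1+(t-c)^k)) :=
            hp1.trans (mul_le_mul_of_nonneg_left hp2 (by positivity))
          have h' := mul_le_mul_of_nonneg_left this hK
          have h'' := mul_le_mul_of_nonneg_right h' (Real.exp_nonneg (-(b*(t-c))))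
          exact mul_le_mul_of_nonneg_right h'' (Real.exp_nonneg (-(b*c)))
      _ = M t := by simp only [hM, hQ]; rw [← hrw]; ring
  -- integral values
  have v1 : ∫ s in Set.Ioi (0:ℝ), Real.exp (-(b*s)) = 1/b := by
    have h := Real.integral_rpow_mul_exp_neg_mul_Ioi (a := 1) one_pos hb0
    simpa [Real.Gamma_one, Real.rpow_one, sub_self, Real.rpow_zero] using h
  have v2 : ∫ s in Set.Ioi (0:ℝ), s^(k:ℝ) * Real.exp (-(b*s))
      = (1/b)^((k:ℝ)+1) * (k.factorial : ℝ) := by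
    have h := Real.integral_rpow_mul_exp_neg_mul_Ioi (a := (k:ℝ)+1) (by positivity) hb0
    rw [add_sub_cancel_right] at h
    rw [h]
    congr 1
    exact_mod_cast Real.Gamma_nat_eq_factorial k
  -- compute ∫ M over Ioi c
  have eM : ∫ t in Set.Ioi c, M t = Q * (1/b + (1/b)^((k:ℝ)+1) * (k.factorial : ℝ)) := by
    rw [← mp.integral_comp emb M, hMshift, integral_const_mul,
      integral_add i1 i2, v1, v2]
  -- final estimate
  have hfinal : Q * (1/b + (1/b)^((k:ℝ)+1) * (k.factorial : ℝ)) ≤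
      (K * (1+c)^k * 2^k * (k.factorial : ℝ)) * (y ^ (-(k:ℝ)-1) + y⁻¹) *
        Real.exp (-(Real.pi*a*y)) := by
    have hbc : b * c = Real.pi * a * y := by rw [hb, hc]; ring
    have hA : 1/b ≤ y⁻¹ := by
      rw [one_div]
      exact inv_anti₀ hy hyb
    have hB : (1/b)^((k:ℝ)+1) ≤ y ^ (-(k:ℝ)-1) := by
      have h1 : (1/b : ℝ)^((k:ℝ)+1) ≤ (1/y)^((k:ℝ)+1) :=
        Real.rpow_le_rpow (by positivity) (by
          rw [one_div, one_div]; exact inv_anti₀ hy hyb) (by positivity)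
      refine h1.trans_eq ?_
      have he : -((k:ℝ)+1) = -(k:ℝ)-1 := by ring
      rw [one_div, Real.inv_rpow hy.le, ← Real.rpow_neg hy.le, he]
    have hf : (1:ℝ) ≤ (k.factorial : ℝ) := Nat.one_le_cast.mpr k.factorial_pos
    have hy1 : (0:ℝ) ≤ y⁻¹ := by positivity
    have hy2 : (0:ℝ) ≤ y ^ (-(k:ℝ)-1) := Real.rpow_nonneg hy.le _
    have hS : 1/b + (1/b)^((k:ℝ)+1) * (k.factorial : ℝ) ≤
        (k.factorial : ℝ) * (y ^ (-(k:ℝ)-1) + y⁻¹) := by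
      have h2 : (1/b)^((k:ℝ)+1) * (k.factorial : ℝ) ≤ y ^ (-(k:ℝ)-1) * (k.factorial : ℝ) :=
        mul_le_mul_of_nonneg_right hB (by positivity)
      nlinarith
    calc Q * (1/b + (1/b)^((k:ℝ)+1) * (k.factorial : ℝ))
        ≤ Q * ((k.factorial : ℝ) * (y ^ (-(k:ℝ)-1) + y⁻¹)) :=
          mul_le_mul_of_nonneg_left hS hQ0
      _ = (K * (1+c)^k * 2^k * (k.factorial : ℝ)) * (y ^ (-(k:ℝ)-1) + y⁻¹) *
          Real.exp (-(Real.pi*a*y)) := by rw [hQ, hbc]; ring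
  calc ‖∫ t in Set.Ioi (0:ℝ), F t‖ = ‖∫ t in Set.Ioi c, F t‖ := by rw [e1]
    _ ≤ ∫ t in Set.Ioi c, M t := norm_integral_le_of_norm_le iM hpt
    _ = Q * (1/b + (1/b)^((k:ℝ)+1) * (k.factorial : ℝ)) := eM
    _ ≤ _ := by rw [hc] at hfinal ⊢; exact hfinal

/-- decay of the Fourier-Carleman transform in presence of a spectral gap. -/
theorem stmt_4 (g : ℝ → ℂ) (K a : ℝ) (k : ℕ) (ha : 0 < a)
    (hcont : Continuous g) (hbound : ∀ t : ℝ, ‖g t‖ ≤ K * (1 + |t|)^k)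
    (hvanish : ∀ t ∈ Set.Ioo (-(a/2)) (a/2), g t = 0)
    (f : ℂ → ℂ)
    (hfp : ∀ z : ℂ, 0 < z.im →
      f z = -∫ t in Set.Ioi (0:ℝ), g t * Complex.exp (2 * Real.pi * Complex.I * z * (t:ℂ)))
    (hfm : ∀ z : ℂ, z.im < 0 →
      f z = ∫ t in Set.Iio (0:ℝ), g t * Complex.exp (2 * Real.pi * Complex.I * z * (t:ℂ))) :
    ∃ C : ℝ, ∀ (x y : ℝ), y ≠ 0 →
      ‖f (x + y * Complex.I)‖ ≤
        C * (|y| ^ (-(k:ℝ) - 1) + |y|⁻¹) * Real.exp (-Real.pi * a * |y|) := by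
  have hK : 0 ≤ K := by
    have h := hbound 0
    simp only [abs_zero, add_zero, one_pow, mul_one] at h
    linarith [norm_nonneg (g 0)]
  refine ⟨K * (1+a/2)^k * 2^k * (k.factorial : ℝ), ?_⟩
  intro x y hy
  set z : ℂ := ↑x + ↑y * I with hz
  have hzim : z.im = y := by simp [hz]
  have hearg : -Real.pi * a * |y| = -(Real.pi * a * |y|) := by ring
  rcases hy.lt_or_gt with hneg | hpos
  · -- y < 0
    rw [hfm z (by rw [hzim]; exact hneg)]
    have hflip : (∫ t in Set.Iio (0:ℝ), g t * Complex.exp (2 * Real.pi * I * z * (t:ℂ)))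
        = ∫ t in Set.Ioi (0:ℝ), g (-t) * Complex.exp (2 * Real.pi * I * z * ((-t:ℝ):ℂ)) := by
      rw [← integral_Iic_eq_integral_Iio]
      have h := integral_comp_neg_Ioi (0:ℝ)
        (fun t : ℝ => g t * Complex.exp (2 * Real.pi * I * z * (t:ℂ)))
      rw [neg_zero] at h
      exact h.symm
    rw [hflip]
    have hcore := aux_core (fun t => g (-t))
      (fun t => Complex.exp (2 * Real.pi * I * z * ((-t:ℝ):ℂ))) K a (-y) k ha
      (by linarith) hK
      (fun t => by simpa [abs_neg] using hbound (-t))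
      (fun t ht => hvanish (-t) ⟨by linarith [ht.2], by linarith [ht.1]⟩)
      (fun t => by
        rw [Complex.norm_exp]
        congr 1
        simp [hz, Complex.mul_re, Complex.mul_im]
        try ring)
    rw [hearg, abs_of_neg hneg]
    exact hcore
  · -- y > 0
    rw [hfp z (by rw [hzim]; exact hpos), norm_neg]
    have hcore := aux_core g
      (fun t => Complex.exp (2 * Real.pi * I * z * (t:ℂ))) K a y k ha hpos hK
      hbound
      (fun t ht => hvanish t ⟨by linarith [ht.1], ht.2⟩)
      (fun t => by
        rw [Complex.norm_exp]
        congr 1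
        simp [hz, Complex.mul_re, Complex.mul_im]
        try ring)
    rw [hearg, abs_of_pos hpos]
    exact hcore
end
end

section
/- For Im z ≠ 0 and k ≥ 0, suppose ĝ(t) = Σ_{p=0}^{k} (2πit)^p Σ_{λ∈Γ} c_p(λ) e^{-2πiλt} with Σ_{p,λ} |c_p(λ)| < ∞, Γ ⊂ ℝ locally finite, and ĝ vanishing on (-a/2, a/2). Then the Fourier–Carleman transform f(z) (defined as -∫_0^∞ ĝ(t)e^{2πizt}dt for Im z > 0 and ∫_{-∞}^0 ĝ(t)e^{2πizt}dt for Im z < 0) equals the Cauchy transform: f(z) = (1/(2πi)) Σ_{p=0}^{k} Σ_{λ∈Γ} c_p(λ) p! (-1)^p / (z-λ)^{p+1} for all z ∈ ℂ \ ℝ. -/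
open MeasureTheory SchwartzMap Complex Filter

noncomputable section

section AuxStmt5
open Set


/-- real integrability -/
lemma real_int {b : ℝ} (hb : 0 < b) (p : ℕ) :
    IntegrableOn (fun t : ℝ => t ^ p * Real.exp (-b * t)) (Ioi 0) := by
  apply integrable_of_isBigO_exp_neg (half_pos hb)
  · exact (continuousOn_pow p).mul ((Real.continuous_exp.comp (continuous_const.mul continuous_id)).continuousOn)
  · have h : Tendsto (fun t : ℝ => t ^ p * Real.exp (-b * t) / Real.exp (-(b/2) * t)) atTop (nhds 0) := by
      have : ∀ᶠ t : ℝ in atTop, t ^ p * Real.exp (-b * t) / Real.exp (-(b/2) * t)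
          = t ^ (p:ℝ) * Real.exp (-(b/2) * t) := by
        filter_upwards [eventually_gt_atTop 0] with t ht
        rw [Real.rpow_natCast, mul_div_assoc, ← Real.exp_sub]
        ring_nf
      rw [tendsto_congr' this]
      exact tendsto_rpow_mul_exp_neg_mul_atTop_nhds_zero _ _ (half_pos hb)
    refine (Asymptotics.isLittleO_of_tendsto (fun x hx => absurd hx (Real.exp_ne_zero _)) h).isBigO

lemma cx_int {w : ℂ} (hw : w.re < 0) (p : ℕ) :
    IntegrableOn (fun t : ℝ => (t:ℂ) ^ p * Complex.exp (w * t)) (Ioi 0) := by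
  have hb : 0 < -w.re := by linarith
  refine Integrable.mono' ((real_int hb p).mono_set (subset_refl _)) ?_ ?_
  · apply Continuous.aestronglyMeasurable
    exact (continuous_ofReal.pow p).mul (Complex.continuous_exp.comp (continuous_const.mul continuous_ofReal))
  · filter_upwards [ae_restrict_mem measurableSet_Ioi] with t ht
    rw [norm_mul, Complex.norm_exp]
    simp only [norm_pow, Complex.norm_real, Real.norm_eq_abs]
    rw [abs_of_pos ht]
    have : (w * (t:ℂ)).re = w.re * t := by simp [Complex.mul_re]
    rw [this]
    apply le_of_eq
    ring_nf

lemma cx_tendsto {w : ℂ} (hw : w.re < 0) (p : ℕ) :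
    Tendsto (fun t : ℝ => (t:ℂ) ^ p * Complex.exp (w * t)) atTop (nhds 0) := by
  have hb : 0 < -w.re := by linarith
  rw [tendsto_zero_iff_norm_tendsto_zero]
  have h : Tendsto (fun t : ℝ => t ^ (p:ℝ) * Real.exp (w.re * t)) atTop (nhds 0) := by
    have := tendsto_rpow_mul_exp_neg_mul_atTop_nhds_zero (p:ℝ) (-w.re) hb
    simpa using this
  apply h.congr'
  filter_upwards [eventually_gt_atTop 0] with t ht
  rw [norm_mul, Complex.norm_exp]
  simp only [norm_pow, Complex.norm_real, Real.norm_eq_abs, abs_of_pos ht]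
  have : (w * (t:ℂ)).re = w.re * t := by simp [Complex.mul_re]
  rw [this, Real.rpow_natCast]

lemma cx_integral {w : ℂ} (hw : w.re < 0) (p : ℕ) :
    ∫ t in Ioi (0:ℝ), (t:ℂ) ^ p * Complex.exp (w * t) = (p.factorial : ℂ) / (-w) ^ (p+1) := by
  have hw0 : w ≠ 0 := by intro h; rw [h] at hw; simp at hw
  induction p with
  | zero =>
    have key : ∫ t in Ioi (0:ℝ), Complex.exp (w * t) = 0 - Complex.exp (w * 0) / w := by
      apply integral_Ioi_of_hasDerivAt_of_tendsto' (f := fun t : ℝ => Complex.exp (w * t) / w)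
      · intro x _
        have : HasDerivAt (fun t : ℝ => Complex.exp (w * t)) (Complex.exp (w * x) * w) x := by
          have h1 : HasDerivAt (fun t : ℝ => w * (t:ℂ)) w x := by
            simpa using ((hasDerivAt_id (x:ℂ)).const_mul w).comp_ofReal
          simpa [mul_comm] using h1.cexp
        exact (this.div_const w).congr_deriv (mul_div_cancel_right₀ _ hw0)
      · simpa using (cx_int hw 0)
      · have := (cx_tendsto hw 0).div_const w
        simpa using this
    simp only [Nat.factorial_zero, Nat.cast_one, pow_one]
    rw [show ∫ t in Ioi (0:ℝ), (t:ℂ) ^ 0 * Complex.exp (w * t) = ∫ t in Ioi (0:ℝ), Complex.exp (w * t) by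
      simp, key]
    simp [div_eq_iff hw0, neg_ne_zero.mpr hw0]
  | succ p ih =>
    -- ∫ (t^(p+1) e^{wt} + ((p+1)/w) t^p e^{wt}) = 0 - 0
    have key : ∫ t in Ioi (0:ℝ), ((t:ℂ) ^ (p+1) * Complex.exp (w * t)
        + ((p+1:ℕ):ℂ)/w * ((t:ℂ) ^ p * Complex.exp (w * t)))
        = 0 - ((0:ℂ) ^ (p+1) * Complex.exp (w * 0) / w) := by
      apply integral_Ioi_of_hasDerivAt_of_tendsto'
        (f := fun t : ℝ => (t:ℂ) ^ (p+1) * Complex.exp (w * t) / w)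
      · intro x _
        have h1 : HasDerivAt (fun t : ℝ => ((t:ℂ)) ^ (p+1)) (((p+1:ℕ):ℂ) * (x:ℂ) ^ p) x := by
          simpa using (hasDerivAt_pow (p+1) (x:ℂ)).comp_ofReal
        have h2 : HasDerivAt (fun t : ℝ => Complex.exp (w * t)) (Complex.exp (w * x) * w) x := by
          have : HasDerivAt (fun t : ℝ => w * (t:ℂ)) w x := by
            simpa using ((hasDerivAt_id (x:ℂ)).const_mul w).comp_ofReal
          simpa [mul_comm] using this.cexp
        have := (h1.mul h2).div_const w
        exact this.congr_deriv (by field_simp; ring)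
      · exact ((cx_int hw (p+1)).add (((cx_int hw p)).const_mul _))
      · have := ((cx_tendsto hw (p+1)).div_const w)
        simpa using this
    rw [integral_add (cx_int hw (p+1)) ((cx_int hw p).const_mul _),
      integral_const_mul, ih] at key
    have : (∫ t in Ioi (0:ℝ), (t:ℂ) ^ (p+1) * Complex.exp (w * t))
        = -(((p+1:ℕ):ℂ)/w * ((p.factorial : ℂ) / (-w) ^ (p+1))) := by
      rw [eq_neg_iff_add_eq_zero]
      simpa using key
    rw [this, Nat.factorial_succ]
    push_cast
    rw [div_mul_div_comm]
    have hpow : (-w) ^ (p+1+1) = -(w * (-w)^(p+1)) := by rw [pow_succ']; ring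
    rw [hpow, div_neg]

theorem alg1 (u v c q : ℂ) (p : ℕ) (hu : u ≠ 0) (hv : v ≠ 0) :
    c * (-u)^p * (q / (u*v)^(p+1)) = 1/u * (c * q * (-1)^p / v^(p+1)) := by
  have h1 : v^(p+1) ≠ 0 := pow_ne_zero _ hv
  have h2 : u^(p+1) ≠ 0 := pow_ne_zero _ hu
  rw [neg_pow, mul_pow]
  field_simp
  ring

theorem alg2 (u v c q : ℂ) (p : ℕ) (hu : u ≠ 0) (hv : v ≠ 0) :
    -(c * u^p * (q / (-(u*v))^(p+1))) = 1/u * (c * q * (-1)^p / v^(p+1)) := by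
  have h1 : v^(p+1) ≠ 0 := pow_ne_zero _ hv
  have h2 : u^(p+1) ≠ 0 := pow_ne_zero _ hu
  rw [neg_pow, mul_pow]
  field_simp
  ring_nf
  rw [pow_mul', neg_one_sq, one_pow, mul_one]


lemma master {k : ℕ} {S : Type*} [Countable S] (d : ℕ → S → ℂ)
    (hd : Summable fun s : S => ∑ p ∈ Finset.range (k+1), ‖d p s‖)
    {b : ℝ} (hb : 0 < b) (w : S → ℂ) (hw : ∀ s, (w s).re = -b)
    (G : ℝ → ℂ)
    (hG : ∀ t : ℝ, G t = ∑ p ∈ Finset.range (k+1),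
      ∑' s, d p s * ((t:ℂ)^p * Complex.exp (w s * t))) :
    ∫ t in Ioi (0:ℝ), G t
      = ∑' s, ∑ p ∈ Finset.range (k+1), d p s * ((p.factorial:ℂ) / (-(w s))^(p+1)) := by
  have hwre : ∀ s, (w s).re < 0 := fun s => by rw [hw s]; linarith
  have hds : ∀ p, p < k+1 → Summable fun s : S => ‖d p s‖ := by
    intro p hp
    refine hd.of_nonneg_of_le (fun s => norm_nonneg _) (fun s => ?_)
    exact Finset.single_le_sum (f := fun q => ‖d q s‖) (fun q _ => norm_nonneg _)
      (Finset.mem_range.mpr hp)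
  set F : S × Fin (k+1) → ℝ → ℂ :=
    fun i t => d i.2 i.1 * ((t:ℂ)^(i.2:ℕ) * Complex.exp (w i.1 * t)) with hF
  have hexp : ∀ (s : S) (t : ℝ), ‖Complex.exp (w s * t)‖ = Real.exp (-b * t) := by
    intro s t
    rw [Complex.norm_exp,
      show (w s * (t:ℂ)).re = (w s).re * t by simp [Complex.mul_re], hw s]
  have hnorm : ∀ (i : S × Fin (k+1)) {t : ℝ}, 0 ≤ t →
      ‖F i t‖ = ‖d i.2 i.1‖ * (t ^ (i.2:ℕ) * Real.exp (-b * t)) := by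
    rintro ⟨s, p⟩ t ht
    simp only [hF, norm_mul, norm_pow, Complex.norm_real, Real.norm_eq_abs,
      _root_.abs_of_nonneg ht, hexp s t]
  have hFint : ∀ i, Integrable (F i) (volume.restrict (Ioi 0)) := by
    rintro ⟨s, p⟩
    exact ((cx_int (hwre s) (p:ℕ)).const_mul _)
  set A : ℕ → ℝ := fun p => ∫ t in Ioi (0:ℝ), t ^ p * Real.exp (-b * t) with hA
  have hA0 : ∀ p, 0 ≤ A p := fun p =>
    setIntegral_nonneg measurableSet_Ioi
      (fun t ht => mul_nonneg (pow_nonneg (le_of_lt ht) _) (Real.exp_nonneg _))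
  have hFsum : Summable fun i : S × Fin (k+1) => ∫ t in Ioi (0:ℝ), ‖F i t‖ := by
    have heq : ∀ i : S × Fin (k+1), (∫ t in Ioi (0:ℝ), ‖F i t‖) = ‖d i.2 i.1‖ * A (i.2:ℕ) := by
      intro i
      rw [hA, ← integral_const_mul]
      refine setIntegral_congr_fun measurableSet_Ioi (fun t ht => ?_)
      exact hnorm i (le_of_lt ht)
    rw [funext heq]
    refine (summable_prod_of_nonneg ?_).mpr ⟨?_, ?_⟩
    · intro i; exact mul_nonneg (norm_nonneg _) (hA0 _)
    · intro s; exact Summable.of_finite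
    · refine Summable.of_nonneg_of_le
        (fun s => tsum_nonneg (fun p => mul_nonneg (norm_nonneg _) (hA0 _)))
        (fun s => ?_) (hd.mul_right (∑ p ∈ Finset.range (k+1), A p))
      rw [tsum_fintype]
      calc ∑ p : Fin (k+1), ‖d (p:ℕ) s‖ * A (p:ℕ)
          ≤ ∑ p : Fin (k+1), ‖d (p:ℕ) s‖ * (∑ q ∈ Finset.range (k+1), A q) := by
            refine Finset.sum_le_sum (fun p _ => ?_)
            exact mul_le_mul_of_nonneg_left
              (Finset.single_le_sum (f := A) (fun q _ => hA0 q)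
                (Finset.mem_range.mpr p.isLt)) (norm_nonneg _)
        _ = (∑ p ∈ Finset.range (k+1), ‖d p s‖) * (∑ q ∈ Finset.range (k+1), A q) := by
            rw [← Finset.sum_mul,
              Fin.sum_univ_eq_sum_range (fun p => ‖d p s‖) (k+1)]
  have hbound : ∀ t : ℝ, Summable fun i : S × Fin (k+1) =>
      ‖d i.2 i.1‖ * ((1+|t|) ^ k * Real.exp (-b * t)) := by
    intro t
    have : (fun s : S => (∑ p ∈ Finset.range (k+1), ‖d p s‖)
        * ((1+|t|) ^ k * Real.exp (-b * t))) =
        fun s => ∑' p : Fin (k+1), ‖d (p:ℕ) s‖ * ((1+|t|) ^ k * Real.exp (-b * t)) := by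
      funext s
      rw [tsum_fintype, ← Finset.sum_mul, Fin.sum_univ_eq_sum_range (fun p => ‖d p s‖) (k+1)]
    refine (summable_prod_of_nonneg ?_).mpr ⟨?_, ?_⟩
    · intro i; positivity
    · intro s; exact Summable.of_finite
    · exact this ▸ (hd.mul_right _)
  have hFt : ∀ t : ℝ, 0 ≤ t → Summable fun i : S × Fin (k+1) => F i t := by
    intro t ht
    refine Summable.of_norm_bounded (hbound t) ?_
    rintro ⟨s, p⟩
    rw [hnorm ⟨s, p⟩ ht]
    refine mul_le_mul_of_nonneg_left ?_ (norm_nonneg _)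
    refine mul_le_mul_of_nonneg_right ?_ (Real.exp_nonneg _)
    calc t ^ (p:ℕ) ≤ (1+|t|) ^ (p:ℕ) := by
          refine pow_le_pow_left₀ ht ?_ _
          have := le_abs_self t; linarith
      _ ≤ (1+|t|) ^ k := by
          refine pow_le_pow_right₀ ?_ (Nat.lt_succ_iff.mp p.isLt)
          have := abs_nonneg t; linarith
  have htsum : ∀ t : ℝ, 0 ≤ t → G t = ∑' i : S × Fin (k+1), F i t := by
    intro t ht
    rw [Summable.tsum_prod' (hFt t ht) (fun s => Summable.of_finite)]
    rw [hG t]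
    rw [show (fun s => ∑' p : Fin (k+1), F (s, p) t)
        = fun s => ∑ p ∈ Finset.range (k+1), d p s * ((t:ℂ)^p * Complex.exp (w s * t)) from
      funext fun s => by
        rw [tsum_fintype]
        exact Fin.sum_univ_eq_sum_range (fun p => d p s * ((t:ℂ)^p * Complex.exp (w s * t))) (k+1)]
    rw [Summable.tsum_finsetSum]
    intro p hp
    refine Summable.of_norm_bounded (((hds p (Finset.mem_range.mp hp)).mul_right
      (|t| ^ p * Real.exp (-b * t)))) (fun s => ?_)
    rw [norm_mul]
    refine mul_le_mul_of_nonneg_left (le_of_eq ?_) (norm_nonneg _)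
    rw [norm_mul, norm_pow, Complex.norm_real, Real.norm_eq_abs, hexp s t]
  have hint : ∫ t in Ioi (0:ℝ), G t = ∑' i : S × Fin (k+1), ∫ t in Ioi (0:ℝ), F i t := by
    rw [setIntegral_congr_fun measurableSet_Ioi
      (fun t (ht : t ∈ Ioi 0) => htsum t (le_of_lt ht))]
    exact (integral_tsum_of_summable_integral_norm hFint hFsum).symm
  have hval : ∀ i : S × Fin (k+1), (∫ t in Ioi (0:ℝ), F i t)
      = d i.2 i.1 * (((i.2:ℕ).factorial:ℂ) / (-(w i.1))^((i.2:ℕ)+1)) := by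
    rintro ⟨s, p⟩
    rw [hF]
    rw [integral_const_mul, cx_integral (hwre s)]
  have hsummable : Summable fun i : S × Fin (k+1) =>
      d i.2 i.1 * (((i.2:ℕ).factorial:ℂ) / (-(w i.1))^((i.2:ℕ)+1)) := by
    refine Summable.congr ?_ hval
    exact (hasSum_integral_of_summable_integral_norm hFint hFsum).summable
  rw [hint, tsum_congr hval, Summable.tsum_prod' hsummable (fun s => Summable.of_finite)]
  refine tsum_congr (fun s => ?_)
  rw [tsum_fintype]
  exact Fin.sum_univ_eq_sum_range (fun p => d p s * ((p.factorial:ℂ) / (-(w s))^(p+1))) (k+1)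

end AuxStmt5

open Set in
/-- the Fourier-Carleman transform equals the Cauchy transform. -/
theorem stmt_5 (Γ : Set ℝ) (hΓ : LocallyFinite' Γ) (k : ℕ) (c : ℕ → ℝ → ℂ)
    (hsum : Summable fun lam : Γ => ∑ p ∈ Finset.range (k+1), ‖c p lam‖)
    (a : ℝ) (ha : 0 < a) (g : ℝ → ℂ)
    (hg : ∀ t : ℝ, g t = ∑ p ∈ Finset.range (k+1), (2 * Real.pi * Complex.I * (t:ℂ))^p *
      ∑' lam : Γ, c p (lam : ℝ) * Complex.exp (-2 * Real.pi * Complex.I * ((lam:ℝ):ℂ) * (t:ℂ)))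
    (hvanish : ∀ t ∈ Set.Ioo (-(a/2)) (a/2), g t = 0)
    (f : ℂ → ℂ)
    (hfp : ∀ z : ℂ, 0 < z.im →
      f z = -∫ t in Set.Ioi (0:ℝ), g t * Complex.exp (2 * Real.pi * Complex.I * z * (t:ℂ)))
    (hfm : ∀ z : ℂ, z.im < 0 →
      f z = ∫ t in Set.Iio (0:ℝ), g t * Complex.exp (2 * Real.pi * Complex.I * z * (t:ℂ))) :
    ∀ z : ℂ, z.im ≠ 0 →
      f z = (1 / (2 * Real.pi * Complex.I)) *
        ∑' lam : Γ, ∑ p ∈ Finset.range (k+1),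
          c p (lam : ℝ) * (p.factorial : ℂ) * (-1)^p / (z - ((lam:ℝ):ℂ))^(p+1) := by
  -- countability of Γ
  have hcount : Γ.Countable := by
    have hsub : Γ ⊆ ⋃ n : ℕ, Γ ∩ Icc (-(n:ℝ)) n := by
      intro x hx
      obtain ⟨n, hn⟩ := exists_nat_ge |x|
      exact Set.mem_iUnion.mpr ⟨n, hx, by
        rw [mem_Icc]
        constructor
        · have := neg_abs_le x; linarith
        · have := le_abs_self x; linarith⟩
    exact Set.Countable.mono hsub
      (countable_iUnion fun n => (hΓ _ isCompact_Icc).countable)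
    |>.mono (subset_refl _)
  haveI : Countable Γ := hcount.to_subtype
  have hπ : (0:ℝ) < Real.pi := Real.pi_pos
  set u : ℂ := 2 * Real.pi * Complex.I with hu
  have hu0 : u ≠ 0 := by
    rw [hu]
    exact mul_ne_zero (mul_ne_zero two_ne_zero
      (by exact_mod_cast Real.pi_ne_zero)) Complex.I_ne_zero
  intro z hz
  have hzl : ∀ s : Γ, (z - ((s:ℝ):ℂ)) ≠ 0 := by
    intro s h
    apply hz
    have : (z - ((s:ℝ):ℂ)).im = z.im := by simp
    rw [← this, h]; simp
  rcases lt_or_gt_of_ne hz with hneg | hpos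
  · -- Im z < 0
    set w : Γ → ℂ := fun s => -(u * (z - ((s:ℝ):ℂ))) with hwdef
    have hb : (0:ℝ) < -(2 * Real.pi * z.im) := by nlinarith
    have hwre : ∀ s : Γ, (w s).re = -(-(2 * Real.pi * z.im)) := by
      intro s
      simp [hwdef, hu, Complex.mul_re, Complex.mul_im]
    set d : ℕ → Γ → ℂ := fun p s => c p (s:ℝ) * (-u)^p with hddef
    have hd : Summable fun s : Γ => ∑ p ∈ Finset.range (k+1), ‖d p s‖ := by
      have h2π : (1:ℝ) ≤ 2 * Real.pi := by have := Real.pi_gt_three; linarith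
      refine (hsum.mul_right ((2*Real.pi)^k)).of_nonneg_of_le
        (fun s => Finset.sum_nonneg fun p _ => norm_nonneg _) (fun s => ?_)
      rw [Finset.sum_mul]
      refine Finset.sum_le_sum (fun p hp => ?_)
      rw [hddef]
      simp only [norm_mul, norm_pow, norm_neg]
      have hnu : ‖u‖ = 2 * Real.pi := by
        rw [hu, norm_mul, norm_mul, Complex.norm_I, Complex.norm_real, Real.norm_eq_abs,
          _root_.abs_of_pos hπ]
        norm_num
      rw [hnu]
      refine mul_le_mul_of_nonneg_left ?_ (norm_nonneg _)
      exact pow_le_pow_right₀ h2π (Nat.lt_succ_iff.mp (Finset.mem_range.mp hp))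
    have hG : ∀ t : ℝ, g (-t) * Complex.exp (u * z * (-t:ℝ)) = ∑ p ∈ Finset.range (k+1),
        ∑' s : Γ, d p s * ((t:ℂ)^p * Complex.exp (w s * t)) := by
      intro t
      rw [hg (-t), Finset.sum_mul]
      refine Finset.sum_congr rfl (fun p hp => ?_)
      rw [← tsum_mul_left, ← tsum_mul_right]
      refine tsum_congr (fun s => ?_)
      have hexp : Complex.exp (-2 * Real.pi * Complex.I * ((s:ℝ):ℂ) * ((-t:ℝ):ℂ))
          * Complex.exp (u * z * ((-t:ℝ):ℂ)) = Complex.exp (w s * t) := by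
        rw [← Complex.exp_add]
        congr 1
        rw [hwdef, hu]
        push_cast
        ring
      rw [← hexp, hddef]
      push_cast
      rw [show (2 * (Real.pi:ℂ) * Complex.I * -(t:ℂ)) = (-u) * (t:ℂ) by rw [hu]; ring, mul_pow]
      ring
    have key : f z = ∑' s : Γ, ∑ p ∈ Finset.range (k+1),
        d p s * ((p.factorial:ℂ) / (-(w s))^(p+1)) := by
      rw [hfm z hneg]
      have h1 : (∫ t in Iio (0:ℝ), g t * Complex.exp (u * z * (t:ℂ)))
          = ∫ t in Ioi (0:ℝ), g (-t) * Complex.exp (u * z * ((-t:ℝ):ℂ)) := by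
        rw [← integral_Iic_eq_integral_Iio]
        have h2 := integral_comp_neg_Ioi (0:ℝ) (fun x => g x * Complex.exp (u * z * (x:ℂ)))
        rw [neg_zero] at h2
        exact h2.symm
      rw [h1]
      exact master d hd hb w hwre
        (fun t => g (-t) * Complex.exp (u * z * ((-t:ℝ):ℂ))) hG
    rw [key, ← tsum_mul_left]
    refine tsum_congr (fun s => ?_)
    rw [Finset.mul_sum]
    refine Finset.sum_congr rfl (fun p hp => ?_)
    simp only [hddef, hwdef, neg_neg]
    exact alg1 u (z - ((s:ℝ):ℂ)) (c p (s:ℝ)) _ p hu0 (hzl s)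
  · -- Im z > 0
    set w : Γ → ℂ := fun s => u * (z - ((s:ℝ):ℂ)) with hwdef
    have hb : (0:ℝ) < 2 * Real.pi * z.im := by nlinarith
    have hwre : ∀ s : Γ, (w s).re = -(2 * Real.pi * z.im) := by
      intro s
      simp [hwdef, hu, Complex.mul_re, Complex.mul_im]
    set d : ℕ → Γ → ℂ := fun p s => c p (s:ℝ) * u^p with hddef
    have hd : Summable fun s : Γ => ∑ p ∈ Finset.range (k+1), ‖d p s‖ := by
      have h2π : (1:ℝ) ≤ 2 * Real.pi := by have := Real.pi_gt_three; linarith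
      refine (hsum.mul_right ((2*Real.pi)^k)).of_nonneg_of_le
        (fun s => Finset.sum_nonneg fun p _ => norm_nonneg _) (fun s => ?_)
      rw [Finset.sum_mul]
      refine Finset.sum_le_sum (fun p hp => ?_)
      rw [hddef]
      simp only [norm_mul, norm_pow]
      have hnu : ‖u‖ = 2 * Real.pi := by
        rw [hu, norm_mul, norm_mul, Complex.norm_I, Complex.norm_real, Real.norm_eq_abs,
          _root_.abs_of_pos hπ]
        norm_num
      rw [hnu]
      refine mul_le_mul_of_nonneg_left ?_ (norm_nonneg _)
      exact pow_le_pow_right₀ h2π (Nat.lt_succ_iff.mp (Finset.mem_range.mp hp))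
    have hG : ∀ t : ℝ, g t * Complex.exp (u * z * (t:ℂ)) = ∑ p ∈ Finset.range (k+1),
        ∑' s : Γ, d p s * ((t:ℂ)^p * Complex.exp (w s * t)) := by
      intro t
      rw [hg t, Finset.sum_mul]
      refine Finset.sum_congr rfl (fun p hp => ?_)
      rw [← tsum_mul_left, ← tsum_mul_right]
      refine tsum_congr (fun s => ?_)
      have hexp : Complex.exp (-2 * Real.pi * Complex.I * ((s:ℝ):ℂ) * (t:ℂ))
          * Complex.exp (u * z * (t:ℂ)) = Complex.exp (w s * t) := by
        rw [← Complex.exp_add]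
        congr 1
        rw [hwdef, hu]
        push_cast
        ring
      rw [← hexp, hddef]
      rw [show (2 * (Real.pi:ℂ) * Complex.I * (t:ℂ)) = u * (t:ℂ) by rw [hu], mul_pow]
      ring
    have key : f z = -∑' s : Γ, ∑ p ∈ Finset.range (k+1),
        d p s * ((p.factorial:ℂ) / (-(w s))^(p+1)) := by
      rw [hfp z hpos,
        master d hd hb w hwre (fun t => g t * Complex.exp (u * z * (t:ℂ))) hG]
    rw [key, ← tsum_neg, ← tsum_mul_left]
    refine tsum_congr (fun s => ?_)
    rw [← Finset.sum_neg_distrib, Finset.mul_sum]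
    refine Finset.sum_congr rfl (fun p hp => ?_)
    simp only [hddef, hwdef]
    exact alg2 u (z - ((s:ℝ):ℂ)) (c p (s:ℝ)) _ p hu0 (hzl s)
end
end

section
/- Let f(x) = Σ_{p=0}^{k} (2πix)^p Σ_{λ∈Λ} b_p(λ) e^{-2πiλx} with Λ ⊂ ℝ locally finite and Σ_{p,λ} |b_p(λ)| < ∞. For u ∈ ℝ define g(x,u) = f(x)·conj(f(x-u)). Then g(x,u) = Σ_{l=0}^{2k} (2πix)^l Σ_{h∈Λ-Λ} A_{h,l}(u) e^{-2πihx}, where A_{h,l}(u) = Σ_{(p,q,j)∈J(k,l)} (-1)^{p+j} C(p,j) (2πiu)^j Σ_{λ∈Λ_h} b_q(λ+h) conj(b_p(λ)) e^{-2πiλu}, J(k,l) is the set of triples (p,q,j) ∈ ℤ³ with 0 ≤ p,q ≤ k, 0 ≤ j ≤ p, p+q-j = l, and Λ_h = Λ ∩ (Λ - h). Moreover Σ_{l=0}^{2k} Σ_{h∈Λ-Λ} |A_{h,l}(u)| < ∞ for each u. -/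
open MeasureTheory SchwartzMap Complex Filter

noncomputable section

namespace Stmt17Aux

/-- e(t,x) = exp(-2πitx) -/
def eC (t x : ℝ) : ℂ := Complex.exp (-2 * Real.pi * Complex.I * (t:ℂ) * (x:ℂ))

lemma norm_eC (t x : ℝ) : ‖eC t x‖ = 1 := by
  have : eC t x = Complex.exp (((-2 * Real.pi * t * x : ℝ) : ℂ) * Complex.I) := by
    unfold eC; congr 1; push_cast; ring
  rw [this]; exact Complex.norm_exp_ofReal_mul_I _

lemma star_eC (t x : ℝ) : (starRingEnd ℂ) (eC t x) = eC (-t) x := by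
  unfold eC
  rw [← Complex.exp_conj]
  congr 1
  simp only [map_mul, map_neg, Complex.conj_I, Complex.conj_ofReal, map_ofNat]
  push_cast; ring

lemma eC_mul (s t x : ℝ) : eC s x * eC t x = eC (s+t) x := by
  unfold eC; rw [← Complex.exp_add]; congr 1; push_cast; ring

lemma eC_sub_arg (t x u : ℝ) : eC t (x - u) = eC t x * eC (-t) u := by
  unfold eC; rw [← Complex.exp_add]; congr 1; push_cast; ring

variable (Λ : Set ℝ)

abbrev D := {d : ℝ // ∃ y ∈ Λ, ∃ y' ∈ Λ, d = y' - y}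
abbrev Fib (h : ℝ) := {x : ℝ // x ∈ Λ ∧ x + h ∈ Λ}

def pairMap : (Σ h : D Λ, Fib Λ (h : ℝ)) → (Λ × Λ) :=
  fun s => (⟨(s.2 : ℝ) + (s.1 : ℝ), s.2.2.2⟩, ⟨(s.2 : ℝ), s.2.2.1⟩)

lemma pairMap_bij : Function.Bijective (pairMap Λ) := by
  constructor
  · rintro ⟨h, a⟩ ⟨h', a'⟩ e
    have e1 : (a:ℝ) = a' := congrArg (fun z => (z.2 : ℝ)) e
    have e2 : (a:ℝ) + h = (a':ℝ) + h' := congrArg (fun z => (z.1 : ℝ)) e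
    have e3 : (h:ℝ) = h' := by linarith
    obtain rfl : h = h' := Subtype.ext e3
    obtain rfl : a = a' := Subtype.ext e1
    rfl
  · rintro ⟨μ, lam⟩
    refine ⟨⟨⟨(μ:ℝ) - lam, lam, lam.2, μ, μ.2, rfl⟩, ⟨(lam:ℝ), lam.2, by simpa using μ.2⟩⟩, ?_⟩
    refine Prod.ext (Subtype.ext ?_) (Subtype.ext ?_) <;> simp [pairMap]

def pairEquiv : (Σ h : D Λ, Fib Λ (h : ℝ)) ≃ (Λ × Λ) :=
  Equiv.ofBijective _ (pairMap_bij Λ)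

variable {α : Type*} [NormedAddCommGroup α] [CompleteSpace α]

lemma summable_sigma_of_pair {F : Λ × Λ → α} (hF : Summable F) :
    Summable (fun s : Σ h : D Λ, Fib Λ (h : ℝ) => F (pairMap Λ s)) :=
  (pairEquiv Λ).summable_iff.2 hF

lemma summable_fiber {F : Λ × Λ → α} (hF : Summable F) (h : D Λ) :
    Summable (fun a : Fib Λ (h : ℝ) => F (pairMap Λ ⟨h, a⟩)) :=
  (summable_sigma_of_pair Λ hF).comp_injective sigma_mk_injective

lemma summable_fibersum {F : Λ × Λ → α} (hF : Summable F) :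
    Summable (fun h : D Λ => ∑' a : Fib Λ (h : ℝ), F (pairMap Λ ⟨h, a⟩)) :=
  (summable_sigma_of_pair Λ hF).sigma

lemma tsum_pair {F : Λ × Λ → ℂ} (hF : Summable F) :
    ∑' z : Λ × Λ, F z = ∑' (h : D Λ) (a : Fib Λ (h : ℝ)), F (pairMap Λ ⟨h, a⟩) := by
  rw [← (pairEquiv Λ).tsum_eq F]
  exact Summable.tsum_sigma ((pairEquiv Λ).summable_iff.2 hF)



lemma binom (k p q : ℕ) (u x : ℝ) (hp : p ≤ k) :
    (2*Real.pi*Complex.I*(x:ℂ))^q *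
      (starRingEnd ℂ (2*Real.pi*Complex.I*((x - u : ℝ):ℂ)))^p
    = ∑ j ∈ Finset.range (k+1), (-1:ℂ)^(p+j) * ((p.choose j : ℕ) : ℂ) *
        (2*Real.pi*Complex.I*(u:ℂ))^j * (2*Real.pi*Complex.I*(x:ℂ))^(p+q-j) := by
  have h1 : starRingEnd ℂ (2*Real.pi*Complex.I*((x - u : ℝ):ℂ))
      = 2*Real.pi*Complex.I*(u:ℂ) + -(2*Real.pi*Complex.I*(x:ℂ)) := by
    simp only [map_mul, Complex.conj_I, Complex.conj_ofReal, map_ofNat]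
    push_cast; ring
  have hsub : Finset.range (p+1) ⊆ Finset.range (k+1) := Finset.range_subset_range.2 (by omega)
  have hzero : ∀ j ∈ Finset.range (k+1), j ∉ Finset.range (p+1) →
      (-1:ℂ)^(p+j) * ((p.choose j : ℕ) : ℂ) * (2*Real.pi*Complex.I*(u:ℂ))^j *
        (2*Real.pi*Complex.I*(x:ℂ))^(p+q-j) = 0 := by
    intro j _ hj
    have hpj : p < j := by simp only [Finset.mem_range] at hj; omega
    simp [Nat.choose_eq_zero_of_lt hpj]
  rw [h1, add_pow, ← Finset.sum_subset hsub hzero, Finset.mul_sum]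
  refine Finset.sum_congr rfl fun j hj => ?_
  have hjp : j ≤ p := Nat.lt_succ_iff.1 (Finset.mem_range.1 hj)
  have e1 : (-(2*Real.pi*Complex.I*(x:ℂ)))^(p-j)
      = (-1:ℂ)^(p+j) * (2*Real.pi*Complex.I*(x:ℂ))^(p-j) := by
    rw [neg_pow]
    congr 1
    rw [show p+j = (p-j)+2*j from by omega, pow_add, pow_mul]
    simp
  rw [e1, show p+q-j = q+(p-j) from by omega, pow_add]
  ring

section Main

variable (Λ : Set ℝ) (k : ℕ) (b : ℕ → ℝ → ℂ)
variable (hsum : Summable fun lam : Λ => ∑ p ∈ Finset.range (k+1), ‖b p lam‖)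
variable (u x : ℝ)
include hsum

lemma summable_b {p : ℕ} (hp : p ≤ k) : Summable (fun lam : Λ => ‖b p (lam : ℝ)‖) := by
  refine Summable.of_nonneg_of_le (fun lam => norm_nonneg _) (fun lam => ?_) hsum
  exact Finset.single_le_sum (f := fun q => ‖b q (lam : ℝ)‖) (fun i _ => norm_nonneg _)
    (Finset.mem_range.2 (Nat.lt_succ_of_le hp))

/-- the norm-product family over pairs -/
def Fnorm (p q : ℕ) : Λ × Λ → ℝ := fun z => ‖b q (z.1 : ℝ)‖ * ‖b p (z.2 : ℝ)‖

lemma summable_Fnorm {p q : ℕ} (hp : p ≤ k) (hq : q ≤ k) : Summable (Fnorm Λ b p q) :=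
  (summable_b Λ k b hsum hq).mul_of_nonneg (summable_b Λ k b hsum hp)
    (fun _ => norm_nonneg _) (fun _ => norm_nonneg _)

/-- the complex family over pairs (u-dependent part only) -/
def Gc (p q : ℕ) : Λ × Λ → ℂ :=
  fun z => b q (z.1 : ℝ) * (starRingEnd ℂ) (b p (z.2 : ℝ)) * eC (z.2 : ℝ) u

/-- the full complex family over pairs -/
def Fc (p q : ℕ) : Λ × Λ → ℂ :=
  fun z => Gc Λ b u p q z * eC ((z.1 : ℝ) - (z.2 : ℝ)) x

omit hsum in
lemma norm_Gc (p q : ℕ) (z : Λ × Λ) : ‖Gc Λ b u p q z‖ = Fnorm Λ b p q z := by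
  unfold Gc Fnorm
  rw [norm_mul, norm_mul, norm_eC, RCLike.norm_conj, mul_one]

omit hsum in
lemma norm_Fc (p q : ℕ) (z : Λ × Λ) : ‖Fc Λ b u x p q z‖ = Fnorm Λ b p q z := by
  unfold Fc
  rw [norm_mul, norm_eC, mul_one, norm_Gc]

lemma summable_Gc {p q : ℕ} (hp : p ≤ k) (hq : q ≤ k) : Summable (Gc Λ b u p q) := by
  refine Summable.of_norm_bounded (summable_Fnorm Λ k b hsum hp hq) (fun z => ?_)
  rw [norm_Gc]

lemma summable_Fc {p q : ℕ} (hp : p ≤ k) (hq : q ≤ k) : Summable (Fc Λ b u x p q) := by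
  refine Summable.of_norm_bounded (summable_Fnorm Λ k b hsum hp hq) (fun z => ?_)
  rw [norm_Fc]

/-- the inner sum over the fiber Λ_h -/
def w (p q : ℕ) (h : ℝ) : ℂ :=
  ∑' a : Fib Λ h, b q ((a : ℝ) + h) * (starRingEnd ℂ) (b p (a : ℝ)) * eC (a : ℝ) u

def wbar (p q : ℕ) (h : ℝ) : ℝ :=
  ∑' a : Fib Λ h, ‖b q ((a : ℝ) + h)‖ * ‖b p (a : ℝ)‖

omit hsum in
lemma Gc_pairMap (p q : ℕ) (h : D Λ) (a : Fib Λ (h : ℝ)) :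
    Gc Λ b u p q (pairMap Λ ⟨h, a⟩)
      = b q ((a : ℝ) + (h : ℝ)) * (starRingEnd ℂ) (b p (a : ℝ)) * eC (a : ℝ) u := rfl

omit hsum in
lemma Fnorm_pairMap (p q : ℕ) (h : D Λ) (a : Fib Λ (h : ℝ)) :
    Fnorm Λ b p q (pairMap Λ ⟨h, a⟩) = ‖b q ((a : ℝ) + (h : ℝ))‖ * ‖b p (a : ℝ)‖ := rfl

omit hsum in
lemma w_eq (p q : ℕ) (h : D Λ) :
    w Λ b u p q (h : ℝ) = ∑' a : Fib Λ (h : ℝ), Gc Λ b u p q (pairMap Λ ⟨h, a⟩) := rfl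

omit hsum in
lemma wbar_eq (p q : ℕ) (h : D Λ) :
    wbar Λ b p q (h : ℝ) = ∑' a : Fib Λ (h : ℝ), Fnorm Λ b p q (pairMap Λ ⟨h, a⟩) := rfl

lemma norm_w_le {p q : ℕ} (hp : p ≤ k) (hq : q ≤ k) (h : D Λ) :
    ‖w Λ b u p q (h : ℝ)‖ ≤ wbar Λ b p q (h : ℝ) := by
  rw [w_eq, wbar_eq]
  have hs : Summable (fun a : Fib Λ (h : ℝ) => ‖Gc Λ b u p q (pairMap Λ ⟨h, a⟩)‖) :=
    (summable_fiber Λ (summable_Fnorm Λ k b hsum hp hq) h).congr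
      (fun a => (norm_Gc Λ b u p q _).symm)
  refine (norm_tsum_le_tsum_norm hs).trans_eq ?_
  exact tsum_congr fun a => norm_Gc Λ b u p q _

lemma summable_wbar {p q : ℕ} (hp : p ≤ k) (hq : q ≤ k) :
    Summable (fun h : D Λ => wbar Λ b p q (h : ℝ)) := by
  simpa only [wbar_eq] using summable_fibersum Λ (summable_Fnorm Λ k b hsum hp hq)

lemma summable_w_eC {p q : ℕ} (hp : p ≤ k) (hq : q ≤ k) :
    Summable (fun h : D Λ => w Λ b u p q (h : ℝ) * eC (h : ℝ) x) := by
  refine Summable.of_norm_bounded (summable_wbar Λ k b hsum hp hq) (fun h => ?_)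
  rw [norm_mul, norm_eC, mul_one]
  exact norm_w_le Λ k b hsum u hp hq h

/-- Key identity for a single pair (p, q). -/
lemma keyPQ {p q : ℕ} (hp : p ≤ k) (hq : q ≤ k) :
    (∑' mu : Λ, b q (mu : ℝ) * eC (mu : ℝ) x) *
      (starRingEnd ℂ) (∑' lam : Λ, b p (lam : ℝ) * eC (lam : ℝ) (x - u))
    = ∑' h : D Λ, w Λ b u p q (h : ℝ) * eC (h : ℝ) x := by
  have hconj : (starRingEnd ℂ) (∑' lam : Λ, b p (lam : ℝ) * eC (lam : ℝ) (x - u))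
      = ∑' lam : Λ, (starRingEnd ℂ) (b p (lam : ℝ)) * (eC (-(lam : ℝ)) x * eC (lam : ℝ) u) := by
    rw [show ((starRingEnd ℂ) (∑' lam : Λ, b p (lam : ℝ) * eC (lam : ℝ) (x - u)))
        = star (∑' lam : Λ, b p (lam : ℝ) * eC (lam : ℝ) (x - u)) from rfl, tsum_star]
    refine tsum_congr fun lam => ?_
    rw [show ∀ z : ℂ, star z = (starRingEnd ℂ) z from fun _ => rfl, map_mul, star_eC,
      eC_sub_arg, neg_neg]
  rw [hconj]
  have hprod : (∑' mu : Λ, b q (mu : ℝ) * eC (mu : ℝ) x) *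
      (∑' lam : Λ, (starRingEnd ℂ) (b p (lam : ℝ)) * (eC (-(lam : ℝ)) x * eC (lam : ℝ) u))
      = ∑' z : Λ × Λ, Fc Λ b u x p q z := by
    rw [← tsum_mul_right]
    rw [Summable.tsum_prod (summable_Fc Λ k b hsum u x hp hq)]
    refine tsum_congr fun mu => ?_
    rw [← tsum_mul_left]
    refine tsum_congr fun lam => ?_
    unfold Fc Gc
    rw [show ((mu : ℝ) - (lam : ℝ)) = (mu : ℝ) + (-(lam : ℝ)) by ring, ← eC_mul]
    ring
  rw [hprod, tsum_pair Λ (summable_Fc Λ k b hsum u x hp hq)]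
  refine tsum_congr fun h => ?_
  rw [w_eq, ← tsum_mul_right]
  refine tsum_congr fun a => ?_
  show Gc Λ b u p q (pairMap Λ ⟨h, a⟩) * eC (((a:ℝ) + (h:ℝ)) - (a:ℝ)) x
      = Gc Λ b u p q (pairMap Λ ⟨h, a⟩) * eC (h : ℝ) x
  congr 2
  ring


def Wf (p q : ℕ) : ℂ :=
  ∑' h : D Λ, w Λ b u p q (h:ℝ) * eC (h:ℝ) x

def Gt (p q j : ℕ) : ℂ :=
  (-1:ℂ)^(p+j) * ((p.choose j : ℕ) : ℂ) * (2*Real.pi*Complex.I*(u:ℂ))^j *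
    (2*Real.pi*Complex.I*(x:ℂ))^(p+q-j) * Wf Λ b u x p q

omit hsum in
lemma eC_fold (t y : ℝ) :
    Complex.exp (-2 * Real.pi * Complex.I * (t:ℂ) * (y:ℂ)) = eC t y := rfl

end Main
end Stmt17Aux

open Stmt17Aux in
/-- expansion of g(x,u) = f(x)·conj(f(x-u)). -/
theorem stmt_17 (Λ : Set ℝ) (hΛ : LocallyFinite' Λ) (k : ℕ) (b : ℕ → ℝ → ℂ)
    (hsum : Summable fun lam : Λ => ∑ p ∈ Finset.range (k+1), ‖b p lam‖)
    (f : ℝ → ℂ)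
    (hf : ∀ x : ℝ, f x = ∑ p ∈ Finset.range (k+1), (2 * Real.pi * Complex.I * (x:ℂ))^p *
      ∑' lam : Λ, b p (lam : ℝ) * Complex.exp (-2 * Real.pi * Complex.I * ((lam:ℝ):ℂ) * (x:ℂ)))
    (J : ℕ → Finset (ℕ × ℕ × ℕ))
    (hJ : ∀ l : ℕ, J l = (Finset.range (k+1) ×ˢ Finset.range (k+1) ×ˢ Finset.range (k+1)).filter
      (fun pqj => pqj.2.2 ≤ pqj.1 ∧ pqj.1 + pqj.2.1 = l + pqj.2.2))
    (A : ℝ → ℕ → ℝ → ℂ)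
    (hA : ∀ (h : ℝ) (l : ℕ) (u : ℝ), A h l u =
      ∑ pqj ∈ J l, (-1 : ℂ)^(pqj.1 + pqj.2.2) * ((pqj.1.choose pqj.2.2 : ℕ) : ℂ) *
        (2 * Real.pi * Complex.I * (u:ℂ))^(pqj.2.2) *
        ∑' lam : {x : ℝ // x ∈ Λ ∧ x + h ∈ Λ},
          b pqj.2.1 ((lam : ℝ) + h) * starRingEnd ℂ (b pqj.1 (lam : ℝ)) *
            Complex.exp (-2 * Real.pi * Complex.I * ((lam:ℝ):ℂ) * (u:ℂ))) :
    ∀ u : ℝ,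
      (∀ x : ℝ, f x * starRingEnd ℂ (f (x - u)) =
        ∑ l ∈ Finset.range (2*k+1), (2 * Real.pi * Complex.I * (x:ℂ))^l *
          ∑' h : {d : ℝ // ∃ y ∈ Λ, ∃ y' ∈ Λ, d = y' - y},
            A (h : ℝ) l u * Complex.exp (-2 * Real.pi * Complex.I * ((h:ℝ):ℂ) * (x:ℂ))) ∧
      Summable (fun h : {d : ℝ // ∃ y ∈ Λ, ∃ y' ∈ Λ, d = y' - y} =>
        ∑ l ∈ Finset.range (2*k+1), ‖A (h : ℝ) l u‖) := by
  intro u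
  have hJle : ∀ l (pqj : ℕ × ℕ × ℕ), pqj ∈ J l →
      pqj.1 ≤ k ∧ pqj.2.1 ≤ k ∧ pqj.2.2 ≤ pqj.1 ∧ pqj.1 + pqj.2.1 = l + pqj.2.2 := by
    intro l pqj hm
    rw [hJ] at hm
    simp only [Finset.mem_filter, Finset.mem_product, Finset.mem_range] at hm
    omega
  have hDefA : ∀ (h : ℝ) (l : ℕ), A h l u = ∑ pqj ∈ J l,
      (-1:ℂ)^(pqj.1+pqj.2.2) * ((pqj.1.choose pqj.2.2 : ℕ) : ℂ) *
        (2*Real.pi*Complex.I*(u:ℂ))^pqj.2.2 * w Λ b u pqj.1 pqj.2.1 h := by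
    intro h l
    rw [hA]
    rfl
  constructor
  · -- the identity
    intro x
    have hL : f x * starRingEnd ℂ (f (x-u)) =
        ∑ q ∈ Finset.range (k+1), ∑ p ∈ Finset.range (k+1), ∑ j ∈ Finset.range (k+1),
          Gt Λ b u x p q j := by
      rw [hf x, hf (x-u), map_sum, Finset.sum_mul_sum]
      simp only [eC_fold]
      refine Finset.sum_congr rfl fun q hq => Finset.sum_congr rfl fun p hp => ?_
      have hp' : p ≤ k := Nat.lt_succ_iff.1 (Finset.mem_range.1 hp)
      have hq' : q ≤ k := Nat.lt_succ_iff.1 (Finset.mem_range.1 hq)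
      rw [map_mul, map_pow, mul_mul_mul_comm, keyPQ Λ k b hsum u x hp' hq',
        binom k p q u x hp', Finset.sum_mul]
      exact Finset.sum_congr rfl fun j _ => rfl
    rw [hL]
    simp only [eC_fold]
    have hstep2 : ∑ l ∈ Finset.range (2*k+1), (2 * Real.pi * Complex.I * (x:ℂ))^l *
        ∑' h : D Λ, A (h:ℝ) l u * eC (h:ℝ) x
        = ∑ l ∈ Finset.range (2*k+1), ∑ pqj ∈ J l, Gt Λ b u x pqj.1 pqj.2.1 pqj.2.2 := by
      refine Finset.sum_congr rfl fun l hl => ?_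
      have h1 : ∀ h : D Λ, A (h:ℝ) l u * eC (h:ℝ) x = ∑ pqj ∈ J l,
          ((-1:ℂ)^(pqj.1+pqj.2.2) * ((pqj.1.choose pqj.2.2 : ℕ) : ℂ) *
            (2*Real.pi*Complex.I*(u:ℂ))^pqj.2.2) *
          (w Λ b u pqj.1 pqj.2.1 (h:ℝ) * eC (h:ℝ) x) := by
        intro h
        rw [hDefA, Finset.sum_mul]
        exact Finset.sum_congr rfl fun pqj _ => by ring
      rw [tsum_congr h1, Summable.tsum_finsetSum (fun pqj hm =>
        ((summable_w_eC Λ k b hsum u x (hJle l pqj hm).1 (hJle l pqj hm).2.1).mul_left _)),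
        Finset.mul_sum]
      refine Finset.sum_congr rfl fun pqj hm => ?_
      rw [tsum_mul_left]
      have hl' : pqj.1 + pqj.2.1 - pqj.2.2 = l := by have := hJle l pqj hm; omega
      rw [← hl']
      show _ = _ * _ * _ * _ * Wf Λ b u x pqj.1 pqj.2.1
      rw [show Wf Λ b u x pqj.1 pqj.2.1
        = ∑' h : D Λ, w Λ b u pqj.1 pqj.2.1 (h:ℝ) * eC (h:ℝ) x from rfl]
      ring
    rw [hstep2]
    -- now: triple sum = fiberwise sum
    have hfib : ∑ l ∈ Finset.range (2*k+1), ∑ pqj ∈ J l, Gt Λ b u x pqj.1 pqj.2.1 pqj.2.2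
        = ∑ pqj ∈ ((Finset.range (k+1) ×ˢ Finset.range (k+1) ×ˢ Finset.range (k+1)).filter
            (fun v => v.2.2 ≤ v.1)), Gt Λ b u x pqj.1 pqj.2.1 pqj.2.2 := by
      have hJ' : ∀ l, J l = (((Finset.range (k+1) ×ˢ Finset.range (k+1) ×ˢ
          Finset.range (k+1)).filter (fun v => v.2.2 ≤ v.1)).filter
            (fun v => v.1 + v.2.1 - v.2.2 = l)) := by
        intro l
        rw [hJ, Finset.filter_filter]
        refine Finset.filter_congr fun v hv => ?_
        constructor
        · rintro ⟨h1, h2⟩; exact ⟨h1, by omega⟩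
        · rintro ⟨h1, h2⟩; exact ⟨h1, by omega⟩
      calc ∑ l ∈ Finset.range (2*k+1), ∑ pqj ∈ J l, Gt Λ b u x pqj.1 pqj.2.1 pqj.2.2
          = ∑ l ∈ Finset.range (2*k+1),
              ∑ pqj ∈ (((Finset.range (k+1) ×ˢ Finset.range (k+1) ×ˢ
                Finset.range (k+1)).filter (fun v => v.2.2 ≤ v.1)).filter
                  (fun v => v.1 + v.2.1 - v.2.2 = l)), Gt Λ b u x pqj.1 pqj.2.1 pqj.2.2 := by
            exact Finset.sum_congr rfl fun l _ => by rw [← hJ']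
        _ = _ := by
            refine Finset.sum_fiberwise_of_maps_to (fun v hv => ?_) _
            simp only [Finset.mem_filter, Finset.mem_product, Finset.mem_range] at hv
            exact Finset.mem_range.2 (by omega)
    rw [hfib]
    have hfull : ∑ pqj ∈ ((Finset.range (k+1) ×ˢ Finset.range (k+1) ×ˢ
        Finset.range (k+1)).filter (fun v => v.2.2 ≤ v.1)), Gt Λ b u x pqj.1 pqj.2.1 pqj.2.2
        = ∑ pqj ∈ (Finset.range (k+1) ×ˢ Finset.range (k+1) ×ˢ Finset.range (k+1)),
            Gt Λ b u x pqj.1 pqj.2.1 pqj.2.2 := by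
      refine Finset.sum_filter_of_ne fun v hv hne => ?_
      by_contra hc
      refine hne ?_
      have h0 : v.1.choose v.2.2 = 0 := Nat.choose_eq_zero_of_lt (by omega)
      simp [Gt, h0]
    rw [hfull, Finset.sum_product]
    simp only [Finset.sum_product]
    exact Finset.sum_comm
  · -- summability
    have hBs : Summable (fun h : {d : ℝ // ∃ y ∈ Λ, ∃ y' ∈ Λ, d = y' - y} =>
        ∑ l ∈ Finset.range (2*k+1), ∑ pqj ∈ J l,
          ‖(-1:ℂ)^(pqj.1+pqj.2.2) * ((pqj.1.choose pqj.2.2 : ℕ) : ℂ) *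
            (2*Real.pi*Complex.I*(u:ℂ))^pqj.2.2‖ * wbar Λ b pqj.1 pqj.2.1 (h:ℝ)) := by
      refine summable_sum fun l _ => summable_sum fun pqj hm => ?_
      exact (summable_wbar Λ k b hsum (hJle l pqj hm).1 (hJle l pqj hm).2.1).mul_left _
    refine Summable.of_nonneg_of_le (fun h => Finset.sum_nonneg fun l _ => norm_nonneg _)
      (fun h => Finset.sum_le_sum fun l _ => ?_) hBs
    rw [hDefA]
    refine (norm_sum_le _ _).trans (Finset.sum_le_sum fun pqj hm => ?_)
    rw [norm_mul]
    exact mul_le_mul_of_nonneg_left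
      (norm_w_le Λ k b hsum u (hJle l pqj hm).1 (hJle l pqj hm).2.1 h) (norm_nonneg _)
end
end
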